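/- Let K be a nonempty closed subset of a real Hilbert space H and r > 0. If K is r-prox-regular, then for every x ∈ K and every n ∈ N_K(x) one has ⟨n, z−x⟩ ≤ (‖n‖/(2r))‖z−x‖² for all z ∈ K. -/

import Mathlib

open Metric Set
open scoped RealInnerProductSpace

variable {H : Type*} [NormedAddCommGroup H] [InnerProductSpace ℝ H]

/-- The set of nearest points of `K` to `y`. -/
noncomputable def projSet (K : Set H) (y : H) : Set H :=
  {x | x ∈ K ∧ ‖x - y‖ = Metric.infDist y K}

/-- The proximal normal cone to `K` at `x`. -/
def proxNormalCone (K : Set H) (x : H) : Set H :=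
  {u | ∃ l : ℝ, 0 ≤ l ∧ ∃ y : H, x ∈ projSet K y ∧ u = l • (y - x)}

/-- `K` is `r`-prox-regular. -/
def IsProxRegular (r : ℝ) (K : Set H) : Prop :=
  ∀ y : H, 0 < Metric.infDist y K → Metric.infDist y K < r →
    (projSet K y).Nonempty ∧
      ∀ x ∈ projSet K y, x ∈ projSet K (x + (r / ‖y - x‖) • (y - x))

/-- The excess of `A` over `B`: `e(A,B) = sup_{a ∈ A} d(a,B)`. -/
noncomputable def excess (A B : Set H) : ENNReal := ⨆ a ∈ A, EMetric.infEdist a B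

lemma lemA {K : Set H} {x y : H} (hx : x ∈ projSet K y) {t : ℝ} (ht0 : 0 ≤ t) (ht1 : t ≤ 1) :
    x ∈ projSet K (x + t • (y - x)) := by
  obtain ⟨hxK, hd⟩ := hx
  have h1 : x - (x + t • (y - x)) = (-t) • (y - x) := by module
  have h1' : ‖x - (x + t • (y - x))‖ = t * ‖y - x‖ := by
    rw [h1, norm_smul]; simp [abs_of_nonneg ht0]
  have h2 : y - (x + t • (y - x)) = (1 - t) • (y - x) := by module
  have h2' : dist y (x + t • (y - x)) = (1 - t) * ‖y - x‖ := by
    rw [dist_eq_norm, h2, norm_smul]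
    simp [abs_of_nonneg (by linarith : (0:ℝ) ≤ 1 - t)]
  refine ⟨hxK, le_antisymm ?_ ?_⟩
  · have h3 : Metric.infDist y K ≤ Metric.infDist (x + t • (y - x)) K
        + dist y (x + t • (y - x)) := Metric.infDist_le_infDist_add_dist
    have h4 : ‖x - y‖ = ‖y - x‖ := by rw [norm_sub_rev]
    rw [h1']
    rw [h4] at hd
    linarith [h3, hd.symm]
  · calc Metric.infDist (x + t • (y - x)) K ≤ dist (x + t • (y - x)) x :=
          Metric.infDist_le_dist_of_mem hxK
      _ = ‖x - (x + t • (y - x))‖ := by rw [dist_comm, dist_eq_norm]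

lemma lemB {K : Set H} {x u : H} (hu : ‖u‖ = 1) {r : ℝ} (hr : 0 < r)
    (hx : x ∈ projSet K (x + r • u)) :
    ∀ z ∈ K, (inner ℝ u (z - x) : ℝ) ≤ ‖z - x‖ ^ 2 / (2 * r) := by
  intro z hz
  obtain ⟨hxK, hd⟩ := hx
  have h1 : ‖x - (x + r • u)‖ = r := by
    simp [norm_smul, hu, abs_of_pos hr]
  have h2 : Metric.infDist (x + r • u) K ≤ dist (x + r • u) z :=
    Metric.infDist_le_dist_of_mem hz
  have h3 : r ≤ ‖z - (x + r • u)‖ := by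
    rw [dist_comm, dist_eq_norm] at h2
    rw [h1] at hd; linarith [hd, h2]
  have h4 : z - (x + r • u) = (z - x) - r • u := by module
  have h5 : ‖(z - x) - r • u‖ ^ 2
      = ‖z - x‖ ^ 2 - 2 * inner ℝ (z - x) (r • u) + ‖r • u‖ ^ 2 := by
    rw [← real_inner_self_eq_norm_sq, ← real_inner_self_eq_norm_sq,
      ← real_inner_self_eq_norm_sq]
    rw [inner_sub_sub_self, real_inner_comm (r • u) (z - x)]; ring
  have h6 : (inner ℝ (z - x) (r • u) : ℝ) = r * inner ℝ u (z - x) := by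
    rw [real_inner_smul_right, real_inner_comm]
  have h7 : ‖r • u‖ = r := by simp [norm_smul, hu, abs_of_pos hr]
  have h8 : r ^ 2 ≤ ‖(z - x) - r • u‖ ^ 2 := by
    rw [← h4]
    exact pow_le_pow_left₀ hr.le h3 2
  rw [h5, h6, h7] at h8
  rw [le_div_iff₀ (by positivity : (0:ℝ) < 2 * r)]
  nlinarith [h8, hr]

theorem stmt_8 [CompleteSpace H] (r : ℝ) (hr : 0 < r) (K : Set H)
    (hK : IsClosed K) (hKne : K.Nonempty) (hreg : IsProxRegular r K)
    (x : H) (hx : x ∈ K) (n : H) (hn : n ∈ proxNormalCone K x) :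
    ∀ z ∈ K, (inner ℝ n (z - x) : ℝ) ≤ (‖n‖ / (2 * r)) * ‖z - x‖ ^ 2 := by
  intro z hz
  obtain ⟨l, hl, y, hxy, hn⟩ := hn
  by_cases hn0 : n = 0
  · subst hn0
    simp
  have hl0 : 0 < l := by
    rcases hl.lt_or_eq with h | h
    · exact h
    · exfalso; apply hn0; rw [hn, ← h, zero_smul]
  have hyx : y - x ≠ 0 := by
    intro h; apply hn0; rw [hn, h, smul_zero]
  set d : ℝ := ‖y - x‖ with hdd
  have hd0 : 0 < d := norm_pos_iff.mpr hyx
  set t : ℝ := min 1 (r / (2 * d)) with htd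
  have ht0 : 0 < t := lt_min one_pos (by positivity)
  have ht1 : t ≤ 1 := min_le_left _ _
  have hxy' : x ∈ projSet K (x + t • (y - x)) := lemA hxy ht0.le ht1
  have hnorm : ‖x - (x + t • (y - x))‖ = t * d := by
    have : x - (x + t • (y - x)) = (-t) • (y - x) := by module
    rw [this, norm_smul]; simp [abs_of_nonneg ht0.le, hdd]
  have hinf : Metric.infDist (x + t • (y - x)) K = t * d := by
    rw [← hxy'.2, hnorm]
  have htd_lt : t * d < r := by
    have : t ≤ r / (2 * d) := min_le_right _ _
    calc t * d ≤ (r / (2 * d)) * d := by nlinarith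
    _ = r / 2 := by field_simp
    _ < r := by linarith
  have hprox := (hreg (x + t • (y - x)) (by rw [hinf]; positivity) (by rw [hinf]; exact htd_lt)).2
    x hxy'
  have hyx' : (x + t • (y - x)) - x = t • (y - x) := by module
  have hnyx' : ‖(x + t • (y - x)) - x‖ = t * d := by
    rw [hyx', norm_smul]; simp [abs_of_nonneg ht0.le, hdd]
  set u : H := d⁻¹ • (y - x) with hu
  have hu1 : ‖u‖ = 1 := by
    rw [hu, norm_smul]; simp [abs_of_pos hd0]
    field_simp
    exact hdd.symm
  have hkey : x + (r / ‖(x + t • (y - x)) - x‖) • ((x + t • (y - x)) - x) = x + r • u := by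
    rw [hnyx', hyx', hu, smul_smul, smul_smul]
    congr 1
    congr 1
    field_simp
  rw [hkey] at hprox
  have hB := lemB hu1 hr hprox z hz
  have hnu : n = (l * d) • u := by
    rw [hn, hu, smul_smul]
    congr 1
    field_simp
  have hnn : ‖n‖ = l * d := by
    rw [hnu, norm_smul, hu1, mul_one]
    exact abs_of_pos (by positivity)
  have hineq : (inner ℝ n (z - x) : ℝ) = (l * d) * inner ℝ u (z - x) := by
    rw [hnu, real_inner_smul_left]
  rw [hineq, hnn]
  have hld : 0 < l * d := by positivity
  calc (l * d) * (inner ℝ u (z - x) : ℝ) ≤ (l * d) * (‖z - x‖ ^ 2 / (2 * r)) := by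
        exact mul_le_mul_of_nonneg_left hB hld.le
    _ = (l * d) / (2 * r) * ‖z - x‖ ^ 2 := by ring
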